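/- arXiv:1202.3880 — 5 statements merged into one kernel-verified Lean document; each statement's English description precedes it below -/
import Mathlib

section
/- With G as above, G⁻¹(y) is asymptotic to e^{y/α} as y → -∞; more precisely, for every ε > 0 there exists C > 0 such that e^{y/α - ε} ≤ G⁻¹(y) ≤ e^{y/α} for all y < -C. -/
/-- `G⁻¹(y) ~ e^{y/α}` as `y → -∞`: for every `ε > 0` there is
`C > 0` with `e^{y/α - ε} ≤ G⁻¹ y ≤ e^{y/α}` for all `y < -C`. -/
theorem stmt2 (α : ℝ) (hα : 0 < α) (Dfun : ℝ → ℝ)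
    (hD0 : Dfun 0 = 0) (hDnn : ∀ u, 0 ≤ u → 0 ≤ Dfun u)
    (hDmono : MonotoneOn Dfun (Set.Ici 0))
    (hDcont : ContinuousOn Dfun (Set.Ici 0))
    (G Ginv : ℝ → ℝ) (hG : ∀ u, G u = α * Real.log u + Dfun u)
    (hGinvPos : ∀ y, 0 < Ginv y)
    (hRight : ∀ y, G (Ginv y) = y) :
    ∀ ε > (0:ℝ), ∃ C > (0:ℝ), ∀ y < -C,
      Real.exp (y / α - ε) ≤ Ginv y ∧ Ginv y ≤ Real.exp (y / α) := by
  intro ε hε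
  -- continuity of D at 0 from the right
  have hcont0 : ContinuousWithinAt Dfun (Set.Ici 0) 0 := hDcont 0 (by simp)
  have htend : Filter.Tendsto Dfun (nhdsWithin 0 (Set.Ici 0)) (nhds 0) := by
    simpa [hD0] using hcont0.tendsto
  obtain ⟨δ, hδpos, hδ⟩ := Metric.tendsto_nhdsWithin_nhds.mp htend (α * ε)
    (by positivity)
  refine ⟨max 1 (-(α * Real.log δ)), lt_of_lt_of_le one_pos (le_max_left _ _), ?_⟩
  intro y hy
  have hGy := hRight y
  rw [hG] at hGy
  have hpos := hGinvPos y
  have hDnn' : 0 ≤ Dfun (Ginv y) := hDnn _ hpos.le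
  -- upper bound
  have hlogle : Real.log (Ginv y) ≤ y / α := by
    rw [le_div_iff₀ hα, mul_comm]
    linarith
  have hupper : Ginv y ≤ Real.exp (y / α) := by
    calc Ginv y = Real.exp (Real.log (Ginv y)) := (Real.exp_log hpos).symm
    _ ≤ Real.exp (y / α) := Real.exp_le_exp.mpr hlogle
  -- y < α log δ
  have hylt : y < α * Real.log δ := by
    have : -(α * Real.log δ) ≤ max 1 (-(α * Real.log δ)) := le_max_right _ _
    linarith
  have hexplt : Real.exp (y / α) < δ := by
    have : y / α < Real.log δ := (div_lt_iff₀' hα).mpr hylt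
    calc Real.exp (y / α) < Real.exp (Real.log δ) := Real.exp_lt_exp.mpr this
    _ = δ := Real.exp_log hδpos
  have hdist : dist (Ginv y) 0 < δ := by
    rw [Real.dist_eq, sub_zero, abs_of_pos hpos]
    exact hupper.trans_lt hexplt
  have hDsmall : Dfun (Ginv y) < α * ε := by
    have := hδ (Set.mem_Ici.mpr hpos.le) hdist
    rw [Real.dist_eq, sub_zero, abs_of_nonneg hDnn'] at this
    exact this
  -- lower bound
  have hloge : y / α - ε ≤ Real.log (Ginv y) := by
    rw [sub_le_iff_le_add, div_le_iff₀ hα]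
    have : α * Real.log (Ginv y) = y - Dfun (Ginv y) := by linarith
    nlinarith
  refine ⟨?_, hupper⟩
  calc Real.exp (y / α - ε) ≤ Real.exp (Real.log (Ginv y)) :=
        Real.exp_le_exp.mpr hloge
  _ = Ginv y := Real.exp_log hpos
end

section
/- Define f : ℝ → ℝ by f(p) = p·(ν - l·G⁻¹(χ log|p|)) for p ≠ 0 and f(0) = 0, where ν, l, χ > 0 and G⁻¹ is the inverse of G(u) = α log u + D(u). Then f is continuously differentiable on ℝ with f'(0) = ν. -/
open Filter Real Topology

/-- `f p = p (ν - l G⁻¹(χ log |p|))` for `p ≠ 0`, `f 0 = 0`,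
is continuously differentiable with `f'(0) = ν`. -/
theorem stmt3 (α ν l χ : ℝ) (hα : 0 < α) (hν : 0 < ν) (hl : 0 < l) (hχ : 0 < χ)
    (d : ℝ → ℝ) (hd : Continuous d) (hdnn : ∀ x, 0 ≤ d x)
    (Ginv : ℝ → ℝ) (hGinvPos : ∀ y, 0 < Ginv y)
    (hGinv' : ∀ y, HasDerivAt Ginv (Ginv y / (α + d (Ginv y))) y)
    (hGinv0 : Filter.Tendsto Ginv Filter.atBot (nhds 0))
    (f : ℝ → ℝ)
    (hf : ∀ p : ℝ, f p =
      if p = 0 then 0 else p * (ν - l * Ginv (χ * Real.log |p|))) :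
    ContDiff ℝ 1 f ∧ deriv f 0 = ν := by
  have hGc : Continuous Ginv := by
    rw [continuous_iff_continuousAt]
    exact fun y => (hGinv' y).continuousAt
  have hden : ∀ u : ℝ, α + d u ≠ 0 := fun u => by
    have := hdnn u; linarith
  -- the candidate derivative
  set g : ℝ → ℝ := fun p => if p = 0 then ν else
    ν - l * Ginv (χ * Real.log p) -
      l * χ * (Ginv (χ * Real.log p) / (α + d (Ginv (χ * Real.log p)))) with hg
  -- tendsto of inner function
  have hlog : Tendsto (fun x : ℝ => χ * Real.log x) (𝓝[≠] (0:ℝ)) atBot :=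
    Real.tendsto_log_nhdsNE_zero.const_mul_atBot hχ
  have htend : Tendsto (fun x : ℝ => Ginv (χ * Real.log x)) (𝓝[≠] (0:ℝ)) (𝓝 0) :=
    hGinv0.comp hlog
  -- derivative everywhere
  have hderiv : ∀ p : ℝ, HasDerivAt f (g p) p := by
    intro p
    rcases eq_or_ne p 0 with rfl | hp
    · rw [hasDerivAt_iff_tendsto_slope]
      have hslope : ∀ᶠ x in 𝓝[≠] (0:ℝ), slope f 0 x = ν - l * Ginv (χ * Real.log x) := by
        filter_upwards [self_mem_nhdsWithin] with x hx
        have hx' : (x : ℝ) ≠ 0 := hx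
        rw [slope_def_field, hf x, hf 0, if_neg hx', if_pos rfl, Real.log_abs]
        field_simp
        ring
      rw [Filter.tendsto_congr' hslope]
      have := (htend.const_mul l).const_sub ν
      simpa [hg] using this
    · -- away from zero
      set y := χ * Real.log p with hy
      have h1 : HasDerivAt (fun x : ℝ => Real.log x) p⁻¹ p := Real.hasDerivAt_log hp
      have h2 : HasDerivAt (fun x : ℝ => χ * Real.log x) (χ * p⁻¹) p := h1.const_mul χ
      have h3 : HasDerivAt (fun x : ℝ => Ginv (χ * Real.log x))
          (Ginv y / (α + d (Ginv y)) * (χ * p⁻¹)) p := (hGinv' y).comp p h2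
      have h4 : HasDerivAt (fun x : ℝ => ν - l * Ginv (χ * Real.log x))
          (-(l * (Ginv y / (α + d (Ginv y)) * (χ * p⁻¹)))) p := (h3.const_mul l).const_sub ν
      have h5 : HasDerivAt (fun x : ℝ => x * (ν - l * Ginv (χ * Real.log x)))
          (1 * (ν - l * Ginv y) + p * (-(l * (Ginv y / (α + d (Ginv y)) * (χ * p⁻¹))))) p :=
        (hasDerivAt_id p).mul h4
      have heq : f =ᶠ[𝓝 p] fun x : ℝ => x * (ν - l * Ginv (χ * Real.log x)) := by
        filter_upwards [eventually_ne_nhds hp] with x hx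
        rw [hf x, if_neg hx, Real.log_abs]
      have h6 := h5.congr_of_eventuallyEq heq
      refine h6.congr_deriv ?_
      simp only [hg]
      rw [if_neg hp]
      field_simp [hden]
      ring
  -- continuity of g
  have hgcont : Continuous g := by
    rw [continuous_iff_continuousAt]
    intro p
    rcases eq_or_ne p 0 with rfl | hp
    · have h0 : g 0 = ν := by simp [hg]
      rw [ContinuousAt, h0, ← nhdsNE_sup_pure, tendsto_sup]
      constructor
      · have hgeq : ∀ᶠ x in 𝓝[≠] (0:ℝ), g x =
            ν - l * Ginv (χ * Real.log x) -
              l * χ * (Ginv (χ * Real.log x) / (α + d (Ginv (χ * Real.log x)))) := by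
          filter_upwards [self_mem_nhdsWithin] with x hx
          simp [hg, if_neg (show x ≠ 0 from hx)]
        rw [Filter.tendsto_congr' hgeq]
        have hq : Tendsto (fun x : ℝ =>
            Ginv (χ * Real.log x) / (α + d (Ginv (χ * Real.log x)))) (𝓝[≠] (0:ℝ))
            (𝓝 (0 / (α + d 0))) := by
          refine Tendsto.div htend ?_ (hden 0)
          exact tendsto_const_nhds.add ((hd.tendsto 0).comp htend)
        have := ((htend.const_mul l).const_sub ν).sub (hq.const_mul (l * χ))
        simpa using this
      · exact h0 ▸ tendsto_pure_nhds g 0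
    · have hgeq : g =ᶠ[𝓝 p] fun x : ℝ =>
          ν - l * Ginv (χ * Real.log x) -
            l * χ * (Ginv (χ * Real.log x) / (α + d (Ginv (χ * Real.log x)))) := by
        filter_upwards [eventually_ne_nhds hp] with x hx
        simp [hg, if_neg hx]
      have hc : ContinuousAt (fun x : ℝ =>
          ν - l * Ginv (χ * Real.log x) -
            l * χ * (Ginv (χ * Real.log x) / (α + d (Ginv (χ * Real.log x))))) p := by
        have hlg : ContinuousAt (fun x : ℝ => Ginv (χ * Real.log x)) p :=
          hGc.continuousAt.comp ((continuousAt_const.mul (Real.continuousAt_log hp)))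
        exact (continuousAt_const.sub (continuousAt_const.mul hlg)).sub
          (continuousAt_const.mul (hlg.div
            (continuousAt_const.add (hd.continuousAt.comp hlg))
            (hden _)))
      exact hc.congr hgeq.symm
  have hdf : deriv f = g := funext fun p => (hderiv p).deriv
  constructor
  · rw [contDiff_one_iff_deriv]
    exact ⟨fun p => (hderiv p).differentiableAt, hdf ▸ hgcont⟩
  · rw [hdf]; simp [hg]
end

section
/- Define g : ℝ → ℝ by g(p) = l·p·G⁻¹(χ log|p|) for p ≠ 0 and g(0) = 0, where l, χ > 0 and G⁻¹ is as above. Then g is continuously differentiable on ℝ with g(0) = 0 and g'(0) = 0, and g maps [0,∞) into [0,∞). -/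
/-- `g p = l p G⁻¹(χ log |p|)` for `p ≠ 0`, `g 0 = 0`, is `C¹`
with `g 0 = 0`, `g'(0) = 0`, and `g` maps `[0,∞)` into `[0,∞)`. -/
theorem stmt5 (α l χ : ℝ) (hα : 0 < α) (hl : 0 < l) (hχ : 0 < χ)
    (d : ℝ → ℝ) (hd : Continuous d) (hdnn : ∀ x, 0 ≤ d x)
    (Ginv : ℝ → ℝ) (hGinvPos : ∀ y, 0 < Ginv y)
    (hGinv' : ∀ y, HasDerivAt Ginv (Ginv y / (α + d (Ginv y))) y)
    (hGinv0 : Filter.Tendsto Ginv Filter.atBot (nhds 0))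
    (hGinvBound : ∃ Y : ℝ, ∀ y ≤ Y, Ginv y ≤ Real.exp (y / α))
    (g : ℝ → ℝ)
    (hg : ∀ p : ℝ, g p =
      if p = 0 then 0 else l * p * Ginv (χ * Real.log |p|)) :
    ContDiff ℝ 1 g ∧ g 0 = 0 ∧ deriv g 0 = 0 ∧ ∀ p ≥ (0:ℝ), 0 ≤ g p := by
  have hGinvCont : Continuous Ginv :=
    continuous_iff_continuousAt.mpr fun y => (hGinv' y).continuousAt
  have hden : ∀ u : ℝ, 0 < α + d u := fun u =>
    add_pos_of_pos_of_nonneg hα (hdnn u)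
  have hgne : ∀ p : ℝ, p ≠ 0 → g p = l * p * Ginv (χ * Real.log p) := by
    intro p hp
    rw [hg p, if_neg hp, Real.log_abs]
  have hg0 : g 0 = 0 := by rw [hg 0, if_pos rfl]
  set g' : ℝ → ℝ := fun p => if p = 0 then 0 else
    l * Ginv (χ * Real.log p) * (1 + χ / (α + d (Ginv (χ * Real.log p))))
    with hg'def
  -- derivative away from 0
  have hderiv_ne : ∀ p : ℝ, p ≠ 0 → HasDerivAt g (g' p) p := by
    intro p hp
    have h1 : HasDerivAt (fun x => χ * Real.log x) (χ * p⁻¹) p :=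
      (Real.hasDerivAt_log hp).const_mul χ
    have h2 : HasDerivAt (fun x => Ginv (χ * Real.log x))
        (Ginv (χ * Real.log p) / (α + d (Ginv (χ * Real.log p))) * (χ * p⁻¹)) p :=
      (hGinv' (χ * Real.log p)).comp p h1
    have h3 : HasDerivAt (fun x : ℝ => l * x) l p := by
      simpa using (hasDerivAt_id p).const_mul l
    have h4 := h3.mul h2
    have hev : g =ᶠ[nhds p] fun x => l * x * Ginv (χ * Real.log x) := by
      filter_upwards [isOpen_ne.mem_nhds hp] with x hx
      exact hgne x hx
    have h5 := h4.congr_of_eventuallyEq hev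
    have heq : l * Ginv (χ * Real.log p) + l * p *
        (Ginv (χ * Real.log p) / (α + d (Ginv (χ * Real.log p))) * (χ * p⁻¹))
        = g' p := by
      rw [hg'def]
      simp only [if_neg hp]
      have h0 : α + d (Ginv (χ * Real.log p)) ≠ 0 := (hden _).ne'
      field_simp
    rw [heq] at h5
    exact h5
  -- key limit
  have hkey : Filter.Tendsto (fun p : ℝ => Ginv (χ * Real.log p))
      (nhdsWithin 0 {0}ᶜ) (nhds 0) := by
    have hlog : Filter.Tendsto (fun p : ℝ => χ * Real.log p)
        (nhdsWithin 0 {0}ᶜ) Filter.atBot :=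
      Filter.Tendsto.const_mul_atBot hχ Real.tendsto_log_nhdsNE_zero
    exact hGinv0.comp hlog
  -- derivative at 0
  have hderiv0 : HasDerivAt g 0 0 := by
    rw [hasDerivAt_iff_tendsto_slope]
    have htend : Filter.Tendsto (fun p : ℝ => l * Ginv (χ * Real.log p))
        (nhdsWithin 0 {0}ᶜ) (nhds 0) := by
      simpa using hkey.const_mul l
    refine htend.congr' ?_
    filter_upwards [self_mem_nhdsWithin] with p hp
    have hp' : p ≠ 0 := hp
    rw [slope_def_field, hg0, hgne p hp']
    field_simp
    ring
  have hderiv : ∀ p, HasDerivAt g (g' p) p := by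
    intro p
    by_cases hp : p = 0
    · subst hp
      simpa [hg'def] using hderiv0
    · exact hderiv_ne p hp
  have hdg : deriv g = g' := funext fun p => (hderiv p).deriv
  -- continuity of g'
  have hg'cont : Continuous g' := by
    rw [continuous_iff_continuousAt]
    intro p
    by_cases hp : p = 0
    · subst hp
      have hd0 : Filter.Tendsto (fun p : ℝ => d (Ginv (χ * Real.log p)))
          (nhdsWithin 0 {0}ᶜ) (nhds (d 0)) := (hd.tendsto 0).comp hkey
      have hfac : Filter.Tendsto
          (fun p : ℝ => 1 + χ / (α + d (Ginv (χ * Real.log p))))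
          (nhdsWithin 0 {0}ᶜ) (nhds (1 + χ / (α + d 0))) :=
        Filter.Tendsto.add tendsto_const_nhds
          (Filter.Tendsto.div tendsto_const_nhds
            (Filter.Tendsto.add tendsto_const_nhds hd0) (hden 0).ne')
      have h1 : Filter.Tendsto g' (nhdsWithin 0 {0}ᶜ) (nhds 0) := by
        have h2 := (hkey.const_mul l).mul hfac
        rw [mul_zero, zero_mul] at h2
        refine h2.congr' ?_
        filter_upwards [self_mem_nhdsWithin] with q hq
        have hq' : q ≠ 0 := hq
        rw [hg'def]
        simp [if_neg hq']
      have h2 : Filter.Tendsto g' (pure (0:ℝ)) (nhds 0) := by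
        have := tendsto_pure_nhds g' (0:ℝ)
        simpa [hg'def] using this
      have h3 : Filter.Tendsto g' (nhds 0) (nhds 0) := by
        nth_rewrite 1 [← nhdsNE_sup_pure (0:ℝ)]
        exact Filter.tendsto_sup.mpr ⟨h1, h2⟩
      have hg'0 : g' 0 = 0 := by rw [hg'def]; simp
      rw [ContinuousAt, hg'0]
      exact h3
    · have hG : ContinuousAt (fun x : ℝ => Ginv (χ * Real.log x)) p :=
        hGinvCont.continuousAt.comp
          (continuousAt_const.mul (Real.continuousAt_log hp))
      have hdc : ContinuousAt (fun x : ℝ => d (Ginv (χ * Real.log x))) p :=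
        hd.continuousAt.comp hG
      have hfrac : ContinuousAt
          (fun x : ℝ => χ / (α + d (Ginv (χ * Real.log x)))) p :=
        ContinuousAt.div continuousAt_const (continuousAt_const.add hdc)
          (hden _).ne'
      have hcont : ContinuousAt (fun x : ℝ =>
          l * Ginv (χ * Real.log x) *
            (1 + χ / (α + d (Ginv (χ * Real.log x))))) p :=
        (continuousAt_const.mul hG).mul (continuousAt_const.add hfrac)
      refine hcont.congr ?_
      filter_upwards [isOpen_ne.mem_nhds hp] with x hx
      rw [hg'def]
      simp [if_neg hx]
  refine ⟨?_, hg0, ?_, ?_⟩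
  · rw [contDiff_one_iff_deriv]
    exact ⟨fun p => (hderiv p).differentiableAt, hdg ▸ hg'cont⟩
  · rw [hdg, hg'def]; simp
  · intro p hp
    rcases eq_or_lt_of_le hp with h | h
    · simp [← h, hg0]
    · rw [hgne p (ne_of_gt h)]
      exact le_of_lt (mul_pos (mul_pos hl h) (hGinvPos _))
end

section
/- Let c, χ, γ, α > 0 with c² > 4γ and χ > α - 2, and define t₊ = c/2 + √(c²-4γ)/2 and κ₊ = -c/χ - c/2 + √(c²-4γ)/2. Then -(χ/α)κ₊ > t₊ holds if and only if c²(χ+1)(α-1) < γ(χ+α)². In particular, if α ≤ 1 the inequality -(χ/α)κ₊ > t₊ always holds. -/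
/-- With `t₊ = c/2 + √(c²-4γ)/2` and
`κ₊ = -c/χ - c/2 + √(c²-4γ)/2`, if `χ > α - 2` then
`-(χ/α)κ₊ > t₊ ↔ c²(χ+1)(α-1) < γ(χ+α)²`; in particular this holds
whenever `α ≤ 1`. -/
theorem stmt10 (α χ γ c : ℝ) (hα : 0 < α) (hχ : 0 < χ) (hγ : 0 < γ)
    (hc : 0 < c) (h4 : 4 * γ < c ^ 2) (hχα : α - 2 < χ)
    (tp κp : ℝ) (htp : tp = c / 2 + Real.sqrt (c ^ 2 - 4 * γ) / 2)
    (hκ : κp = -c / χ - c / 2 + Real.sqrt (c ^ 2 - 4 * γ) / 2) :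
    (tp < -(χ / α) * κp ↔ c ^ 2 * (χ + 1) * (α - 1) < γ * (χ + α) ^ 2) ∧
    (α ≤ 1 → tp < -(χ / α) * κp) := by
  set s := Real.sqrt (c ^ 2 - 4 * γ) with hs
  have hs0 : 0 ≤ s := Real.sqrt_nonneg _
  have hs2 : s ^ 2 = c ^ 2 - 4 * γ := Real.sq_sqrt (by linarith)
  have hrw : -(χ / α) * κp = (c + χ * c / 2 - χ * s / 2) / α := by
    rw [hκ]; field_simp; ring
  have h1 : tp < -(χ / α) * κp ↔ (α + χ) * s < c * (χ - α + 2) := by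
    rw [htp, hrw, lt_div_iff₀ hα]
    constructor <;> intro h <;> nlinarith
  have hpos : 0 < c * (χ - α + 2) := mul_pos hc (by linarith)
  have h2 : (α + χ) * s < c * (χ - α + 2) ↔
      c ^ 2 * (χ + 1) * (α - 1) < γ * (χ + α) ^ 2 := by
    constructor
    · intro h
      have hsq : ((α + χ) * s) ^ 2 < (c * (χ - α + 2)) ^ 2 := by
        have h0 : 0 ≤ (α + χ) * s := by positivity
        nlinarith
      nlinarith
    · intro h
      have hsq : ((α + χ) * s) ^ 2 < (c * (χ - α + 2)) ^ 2 := by nlinarith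
      exact lt_of_pow_lt_pow_left₀ 2 hpos.le hsq
  refine ⟨h1.trans h2, fun hα1 => (h1.trans h2).2 ?_⟩
  nlinarith [mul_nonneg (mul_pos (pow_pos hc 2) (show (0:ℝ) < χ + 1 by linarith)).le (show (0:ℝ) ≤ 1 - α by linarith), mul_pos hγ (pow_pos (add_pos hχ hα) 2)]
end

section
/- Let X be a Banach space, T : X → X bounded linear with spectral radius r(T), and suppose D ⊂ X is a dense subspace which is a Banach space under a norm making the inclusion D ↪ X continuous, such that T maps D into D boundedly and there is λ in the resolvent set of a closed operator A with domain D such that T commutes with (λ - A)⁻¹ and T x = (λ-A)⁻¹ T (λ - A) x for all x ∈ D. Then the spectral radius of T as an operator on (D, ‖·‖_D) equals its spectral radius on X; in particular if r(T) > 1 on X then r(T) > 1 on D. -/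
noncomputable def conjAlgEquiv {X D : Type*}
    [NormedAddCommGroup X] [NormedSpace ℂ X]
    [NormedAddCommGroup D] [NormedSpace ℂ D]
    (e : D ≃L[ℂ] X) : (D →L[ℂ] D) ≃ₐ[ℂ] (X →L[ℂ] X) where
  toFun A := (e : D →L[ℂ] X) ∘L A ∘L (e.symm : X →L[ℂ] D)
  invFun B := (e.symm : X →L[ℂ] D) ∘L B ∘L (e : D →L[ℂ] X)
  left_inv A := by ext x; simp
  right_inv B := by ext x; simp
  map_add' A B := by ext x; simp
  map_mul' A B := by ext x; simp
  commutes' c := by ext x; simp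

/-- If `T ∈ B(X)` restricts to `S ∈ B(D)` via the continuous
dense inclusion `J : D → X`, and `S` is similar to `T` via the isomorphism
`e : D ≃ X` (given by `λ - A` for `λ` in the resolvent set of the closed
operator `A` with domain `D`, so `S = e⁻¹ ∘ T ∘ e`), then the spectral radius
of `S` on `D` equals the spectral radius of `T` on `X`; in particular the
spectral radius on `D` exceeds `1` whenever the one on `X` does. -/
theorem stmt19 {X D : Type*}
    [NormedAddCommGroup X] [NormedSpace ℂ X] [CompleteSpace X]
    [NormedAddCommGroup D] [NormedSpace ℂ D] [CompleteSpace D]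
    (J : D →L[ℂ] X) (hJinj : Function.Injective J) (hJdense : DenseRange J)
    (e : D ≃L[ℂ] X)
    (T : X →L[ℂ] X) (S : D →L[ℂ] D)
    (hcompat : ∀ x : D, J (S x) = T (J x))
    (hsim : ∀ x : D, S x = e.symm (T (e x))) :
    spectralRadius ℂ S = spectralRadius ℂ T ∧
      (1 < spectralRadius ℂ T → 1 < spectralRadius ℂ S) := by
  have hT : conjAlgEquiv e S = T := by
    ext x
    simp [conjAlgEquiv, hsim]
  have hspec : spectrum ℂ S = spectrum ℂ T := by
    rw [← hT, AlgEquiv.spectrum_eq]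
  have heq : spectralRadius ℂ S = spectralRadius ℂ T := by
    unfold spectralRadius; rw [hspec]
  exact ⟨heq, fun h => heq ▸ h⟩
end
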